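/- arXiv:2002.01023 — 2 statements merged into one kernel-verified Lean document; each statement's English description precedes it below -/
import Mathlib

section
/- (Willems' fundamental lemma, rank statement.) Consider x(t+1) = Ax(t) + Bu(t) with (A,B) controllable, and let (u, x) be an input/state trajectory on {0,...,T−1}. If u is persistently exciting of order n + L, then the (n + mL) × (T − L + 1) matrix [H_1(x_{[0,T−L]}); H_L(u_{[0,T−1]})] has full row rank n + mL. -/
/-- Depth-`k` Hankel matrix of a sequence `u : {0,...,T-1} → ℝ^m`. -/
def Hankel (m k T : ℕ) (u : ℕ → Fin m → ℝ) :
    Matrix (Fin k × Fin m) (Fin (T - k + 1)) ℝ :=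
  fun p j => u ((p.1 : ℕ) + (j : ℕ)) p.2

/-- Kalman controllability matrix `[B, AB, ..., A^{n-1}B]`. -/
def ctrbMat (n m : ℕ) (A : Matrix (Fin n) (Fin n) ℝ) (B : Matrix (Fin n) (Fin m) ℝ) :
    Matrix (Fin n) (Fin n × Fin m) ℝ :=
  fun i p => (A ^ (p.1 : ℕ) * B) i p.2

/-- The stacked matrix `[H_1(x_{[0,T-L]}); H_L(u_{[0,T-1]})]`. -/
def stackedXU (n m L T : ℕ) (x : ℕ → Fin n → ℝ) (u : ℕ → Fin m → ℝ) :
    Matrix (Fin n ⊕ Fin L × Fin m) (Fin (T - L + 1)) ℝ :=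
  fun r c =>
    Sum.elim (fun i => x (c : ℕ) i) (fun p => u ((p.1 : ℕ) + (c : ℕ)) p.2) r

open Matrix Finset

lemma rank_eq_card_iff_ker {ι κ : Type*} [Fintype ι] [Fintype κ]
    (M : Matrix ι κ ℝ) :
    M.rank = Fintype.card ι ↔ ∀ v, M.vecMul v = 0 → v = 0 := by
  have h1 : LinearIndependent ℝ M.row ↔ M.rank = Fintype.card ι := by
    rw [M.rank_eq_finrank_span_row, linearIndependent_iff_card_eq_finrank_span, Set.finrank]
    exact eq_comm
  rw [← h1, Fintype.linearIndependent_iff]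
  constructor
  · intro h v hv
    funext i
    refine h v ?_ i
    funext j
    have := congrFun hv j
    simpa [Matrix.vecMul, dotProduct, Matrix.row_apply] using this
  · intro h g hg i
    have hz : M.vecMul g = 0 := by
      funext j
      have := congrFun hg j
      simpa [Matrix.vecMul, dotProduct, Matrix.row_apply] using this
    exact congrFun (h g hz) i

lemma dot_sum {n : ℕ} (w : Fin n → ℝ) (s : Finset ℕ) (f : ℕ → Fin n → ℝ) :
    w ⬝ᵥ (∑ k ∈ s, f k) = ∑ k ∈ s, w ⬝ᵥ f k := by
  simp only [dotProduct, Finset.sum_apply, Finset.mul_sum]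
  exact Finset.sum_comm

lemma sum_dot {n : ℕ} {ι : Type*} (s : Finset ι) (f : ι → Fin n → ℝ) (w : Fin n → ℝ) :
    (∑ k ∈ s, f k) ⬝ᵥ w = ∑ k ∈ s, f k ⬝ᵥ w := by
  simp only [dotProduct, Finset.sum_apply, Finset.sum_mul]
  exact Finset.sum_comm

lemma sum_vecMul' {n p : ℕ} {ι : Type*} (s : Finset ι) (f : ι → Fin n → ℝ)
    (M : Matrix (Fin n) (Fin p) ℝ) :
    (∑ k ∈ s, f k) ᵥ* M = ∑ k ∈ s, (f k) ᵥ* M := by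
  funext j
  simp only [Matrix.vecMul, dotProduct, Finset.sum_apply, Finset.sum_mul]
  exact Finset.sum_comm

lemma traj {n m T : ℕ} (A : Matrix (Fin n) (Fin n) ℝ) (B : Matrix (Fin n) (Fin m) ℝ)
    (u : ℕ → Fin m → ℝ) (x : ℕ → Fin n → ℝ)
    (hx : ∀ t, t + 1 < T → x (t + 1) = A.mulVec (x t) + B.mulVec (u t)) :
    ∀ i j, j + i < T →
      x (j + i) = (A ^ i).mulVec (x j)
        + ∑ k ∈ range i, (A ^ (i - 1 - k) * B).mulVec (u (j + k)) := by
  intro i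
  induction i with
  | zero => intro j _; simp
  | succ i ih =>
    intro j hj
    have hji : j + (i + 1) = (j + i) + 1 := by omega
    rw [hji, hx _ (by omega), ih j (by omega), Matrix.mulVec_add]
    have hAsum : A.mulVec (∑ k ∈ range i, (A ^ (i - 1 - k) * B).mulVec (u (j + k)))
        = ∑ k ∈ range i, (A ^ (i + 1 - 1 - k) * B).mulVec (u (j + k)) := by
      rw [show A.mulVec = A.mulVecLin from rfl, map_sum]
      refine Finset.sum_congr rfl fun k hk => ?_
      have hk' : k < i := Finset.mem_range.mp hk
      have : A ^ (i + 1 - 1 - k) * B = A * (A ^ (i - 1 - k) * B) := by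
        rw [← Matrix.mul_assoc, ← pow_succ']
        congr 2
        omega
      rw [this]; simp [Matrix.mulVec_mulVec]
    rw [hAsum, Finset.sum_range_succ]
    have h1 : A.mulVec ((A ^ i).mulVec (x j)) = (A ^ (i + 1)).mulVec (x j) := by
      rw [Matrix.mulVec_mulVec, ← pow_succ']
    have h2 : (A ^ (i + 1 - 1 - i) * B).mulVec (u (j + i)) = B.mulVec (u (j + i)) := by
      simp
    rw [h1, h2]
    abel

/-- Willems' fundamental lemma, rank statement: if `(A,B)` is controllable, `(u,x)` is an
input/state trajectory on `{0,...,T-1}`, and `u` is persistently exciting of order `n+L`,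
then `[H_1(x_{[0,T-L]}); H_L(u_{[0,T-1]})]` has full row rank `n + mL`. -/
theorem willems_fundamental_lemma_rank (n m L T : ℕ) (hL : 1 ≤ L) (hT : n + L ≤ T)
    (A : Matrix (Fin n) (Fin n) ℝ) (B : Matrix (Fin n) (Fin m) ℝ)
    (hctrb : (ctrbMat n m A B).rank = n)
    (u : ℕ → Fin m → ℝ) (x : ℕ → Fin n → ℝ)
    (hx : ∀ t, t + 1 < T → x (t + 1) = A.mulVec (x t) + B.mulVec (u t))
    (hpe : (Hankel m (n + L) T u).rank = (n + L) * m) :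
    (stackedXU n m L T x u).rank = n + L * m := by
  classical
  have hcard : Fintype.card (Fin n ⊕ Fin L × Fin m) = n + L * m := by simp
  rw [← hcard, rank_eq_card_iff_ker]
  intro v hv
  set ξ : Fin n → ℝ := fun i => v (Sum.inl i) with hxidef
  set ηN : ℕ → Fin m → ℝ :=
    fun k => if h : k < L then (fun e => v (Sum.inr (⟨k, h⟩, e))) else 0 with hetadef
  have hηNzero : ∀ k, L ≤ k → ηN k = 0 := fun k hk => dif_neg (by omega)
  -- the kernel equation for each column
  have hK : ∀ j, j ≤ T - L →
      ξ ⬝ᵥ x j + ∑ k ∈ range L, ηN k ⬝ᵥ u (j + k) = 0 := by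
    intro j hj
    have hjlt : j < T - L + 1 := by omega
    have h0 := congrFun hv (⟨j, hjlt⟩ : Fin (T - L + 1))
    rw [Pi.zero_apply] at h0
    rw [show (Matrix.vecMul v (stackedXU n m L T x u)) ⟨j, hjlt⟩
        = ∑ r, v r * stackedXU n m L T x u r ⟨j, hjlt⟩ from rfl] at h0
    rw [Fintype.sum_sum_type] at h0
    have h2 : ∑ p : Fin L × Fin m, v (Sum.inr p) * stackedXU n m L T x u (Sum.inr p) ⟨j, hjlt⟩
        = ∑ k ∈ range L, ηN k ⬝ᵥ u (j + k) := by
      rw [Fintype.sum_prod_type]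
      rw [← Fin.sum_univ_eq_sum_range (fun k => ηN k ⬝ᵥ u (j + k)) L]
      refine Finset.sum_congr rfl fun a _ => ?_
      have ha : (a : ℕ) < L := a.isLt
      rw [show ηN (a : ℕ) = fun e => v (Sum.inr (⟨(a : ℕ), ha⟩, e)) from dif_pos ha]
      show ∑ e, v (Sum.inr (a, e)) * u ((a : ℕ) + j) e
          = ∑ e, v (Sum.inr (⟨(a : ℕ), ha⟩, e)) * u (j + (a : ℕ)) e
      rw [Nat.add_comm (a : ℕ) j]
    rw [h2] at h0
    exact h0
  -- the shifted relations
  have hR : ∀ i j, i ≤ n → j ≤ T - (n + L) →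
      (ξ ᵥ* (A ^ i)) ⬝ᵥ x j
        + ∑ k ∈ range i, (ξ ᵥ* (A ^ (i - 1 - k) * B)) ⬝ᵥ u (j + k)
        + ∑ k ∈ range L, ηN k ⬝ᵥ u (j + i + k) = 0 := by
    intro i j hi hj
    have hKji := hK (j + i) (by omega)
    rw [traj A B u x hx i j (by omega), dotProduct_add, dot_sum] at hKji
    simp only [Matrix.dotProduct_mulVec] at hKji
    exact hKji
  -- the coefficient functions
  set φ : ℕ → ℕ → Fin m → ℝ :=
    fun i k => if k < i then ξ ᵥ* (A ^ (i - 1 - k) * B) else ηN (k - i) with hphidef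
  have hRφ : ∀ i j, i ≤ n → j ≤ T - (n + L) →
      (ξ ᵥ* (A ^ i)) ⬝ᵥ x j + ∑ k ∈ range (n + L), φ i k ⬝ᵥ u (j + k) = 0 := by
    intro i j hi hj
    have hsplit : ∑ k ∈ range (n + L), φ i k ⬝ᵥ u (j + k)
        = ∑ k ∈ range i, φ i k ⬝ᵥ u (j + k) + ∑ k ∈ Ico i (n + L), φ i k ⬝ᵥ u (j + k) := by
      rw [range_eq_Ico, ← Finset.sum_Ico_consecutive _ (Nat.zero_le i) (by omega : i ≤ n + L),
        ← range_eq_Ico]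
    have h1 : ∑ k ∈ range i, φ i k ⬝ᵥ u (j + k)
        = ∑ k ∈ range i, (ξ ᵥ* (A ^ (i - 1 - k) * B)) ⬝ᵥ u (j + k) := by
      refine Finset.sum_congr rfl fun k hk => ?_
      rw [show φ i k = ξ ᵥ* (A ^ (i - 1 - k) * B) from if_pos (Finset.mem_range.mp hk)]
    have h2 : ∑ k ∈ Ico i (n + L), φ i k ⬝ᵥ u (j + k)
        = ∑ k ∈ range L, ηN k ⬝ᵥ u (j + i + k) := by
      rw [Finset.sum_Ico_eq_sum_range]
      have hstep : ∀ t ∈ range (n + L - i), φ i (i + t) ⬝ᵥ u (j + (i + t))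
          = ηN t ⬝ᵥ u (j + i + t) := by
        intro t _
        rw [show φ i (i + t) = ηN (i + t - i) from if_neg (by omega),
          show i + t - i = t from by omega, show j + (i + t) = j + i + t from by omega]
      rw [Finset.sum_congr rfl hstep]
      symm
      refine Finset.sum_subset ?_ ?_
      · exact Finset.range_subset_range.mpr (by omega)
      · intro t _ ht
        rw [hηNzero t (by simpa using ht)]
        exact zero_dotProduct _
    rw [hsplit, h1, h2, ← add_assoc]
    exact hR i j hi hj
  -- linear dependence of ξ, ξA, ..., ξAⁿ
  have hdep : ¬ LinearIndependent ℝ (fun i : Fin (n + 1) => ξ ᵥ* (A ^ (i : ℕ))) := by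
    intro h
    have := h.fintype_card_le_finrank
    simp [Module.finrank_fin_fun] at this
  obtain ⟨g, hgsum, i0, hgi0⟩ := Fintype.not_linearIndependent_iff.mp hdep
  set αN : ℕ → ℝ := fun i => if h : i < n + 1 then g ⟨i, h⟩ else 0 with halphadef
  have hαsum : ∑ i ∈ range (n + 1), αN i • (ξ ᵥ* A ^ i) = 0 := by
    rw [← Fin.sum_univ_eq_sum_range (fun i => αN i • (ξ ᵥ* A ^ i)) (n + 1), ← hgsum]
    refine Finset.sum_congr rfl fun i _ => ?_
    have : αN (i : ℕ) = g i := dif_pos i.isLt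
    rw [this]
  set d := Nat.findGreatest (fun i => αN i ≠ 0) n with hddef
  have hdle : d ≤ n := Nat.findGreatest_le (P := fun i => αN i ≠ 0) n
  have hdne : αN d ≠ 0 := by
    refine Nat.findGreatest_spec (P := fun i => αN i ≠ 0) (m := (i0 : ℕ)) (Nat.lt_succ_iff.mp i0.isLt) ?_
    show αN (i0 : ℕ) ≠ 0
    have : αN (i0 : ℕ) = g i0 := dif_pos i0.isLt
    rw [this]; exact hgi0
  have hdtop : ∀ i, d < i → αN i = 0 := by
    intro i hi
    by_cases h : i ≤ n
    · have := Nat.findGreatest_is_greatest (P := fun i => αN i ≠ 0) hi h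
      simpa using this
    · exact dif_neg (by omega)
  set W : ℕ → Fin m → ℝ := fun k => ∑ i ∈ range (n + 1), αN i • φ i k with hWdef
  -- PE kills the combined coefficient vector
  have hW0 : ∀ k, k < n + L → W k = 0 := by
    have hcard2 : Fintype.card (Fin (n + L) × Fin m) = (n + L) * m := by simp
    have hker := (rank_eq_card_iff_ker (Hankel m (n + L) T u)).mp (by rw [hpe, hcard2])
    have hwv : Matrix.vecMul (fun p : Fin (n + L) × Fin m => W p.1 p.2)
        (Hankel m (n + L) T u) = 0 := by
      funext c
      have hc : (c : ℕ) ≤ T - (n + L) := by omega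
      rw [Pi.zero_apply]
      rw [show (Matrix.vecMul (fun p : Fin (n + L) × Fin m => W p.1 p.2)
            (Hankel m (n + L) T u)) c
          = ∑ p : Fin (n + L) × Fin m, W p.1 p.2 * u ((p.1 : ℕ) + (c : ℕ)) p.2 from rfl]
      rw [Fintype.sum_prod_type]
      have hrow : ∀ a : Fin (n + L), (∑ e, W (a : ℕ) e * u ((a : ℕ) + (c : ℕ)) e)
          = W (a : ℕ) ⬝ᵥ u ((c : ℕ) + (a : ℕ)) := by
        intro a
        rw [Nat.add_comm (a : ℕ) (c : ℕ)]
        rfl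
      rw [Finset.sum_congr rfl fun a _ => hrow a,
        Fin.sum_univ_eq_sum_range (fun k => W k ⬝ᵥ u ((c : ℕ) + k)) (n + L)]
      calc ∑ k ∈ range (n + L), W k ⬝ᵥ u ((c : ℕ) + k)
          = ∑ k ∈ range (n + L), ∑ i ∈ range (n + 1), αN i * (φ i k ⬝ᵥ u ((c : ℕ) + k)) := by
            refine Finset.sum_congr rfl fun k _ => ?_
            rw [hWdef]
            rw [sum_dot]
            refine Finset.sum_congr rfl fun i _ => ?_
            rw [smul_dotProduct, smul_eq_mul]
        _ = ∑ i ∈ range (n + 1), αN i * (∑ k ∈ range (n + L), φ i k ⬝ᵥ u ((c : ℕ) + k)) := by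
            rw [Finset.sum_comm]
            exact Finset.sum_congr rfl fun i _ => (Finset.mul_sum _ _ _).symm
        _ = ∑ i ∈ range (n + 1), αN i * (-((ξ ᵥ* (A ^ i)) ⬝ᵥ x (c : ℕ))) := by
            refine Finset.sum_congr rfl fun i hi => ?_
            have := hRφ i (c : ℕ) (by simpa using Nat.lt_succ_iff.mp (Finset.mem_range.mp hi)) hc
            have h' : ∑ k ∈ range (n + L), φ i k ⬝ᵥ u ((c : ℕ) + k)
                = -((ξ ᵥ* (A ^ i)) ⬝ᵥ x (c : ℕ)) := by linarith
            rw [h']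
        _ = -((∑ i ∈ range (n + 1), αN i • (ξ ᵥ* A ^ i)) ⬝ᵥ x (c : ℕ)) := by
            rw [sum_dot, ← Finset.sum_neg_distrib]
            refine Finset.sum_congr rfl fun i _ => ?_
            rw [smul_dotProduct, smul_eq_mul, mul_neg]
        _ = 0 := by rw [hαsum, zero_dotProduct, neg_zero]
    intro k hk
    funext e
    have := congrFun (hker _ hwv) (⟨k, hk⟩, e)
    simpa using this
  -- extract η = 0
  have keyη : ∀ s, s < L → ηN (L - 1 - s) = 0 := by
    intro s
    induction s using Nat.strong_induction_on with
    | _ s ih =>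
      intro hs
      funext e
      have hk : d + (L - 1 - s) < n + L := by omega
      have h0 := congrFun (hW0 (d + (L - 1 - s)) hk) e
      rw [show W (d + (L - 1 - s)) e = ∑ i ∈ range (n + 1), αN i * φ i (d + (L - 1 - s)) e from
        by rw [hWdef]; simp [Finset.sum_apply]] at h0
      rw [Finset.sum_eq_single d] at h0
      · have hφ : φ d (d + (L - 1 - s)) e = ηN (L - 1 - s) e := by
          rw [show φ d (d + (L - 1 - s)) = ηN (d + (L - 1 - s) - d) from if_neg (by omega),
            show d + (L - 1 - s) - d = L - 1 - s from by omega]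
        rw [hφ] at h0
        have := mul_eq_zero.mp h0
        rcases this with h | h
        · exact absurd h hdne
        · exact h
      · intro i hi hne
        rcases lt_or_gt_of_ne hne with hlt | hgt
        · have hφ : φ i (d + (L - 1 - s)) = ηN (d + (L - 1 - s) - i) := if_neg (by omega)
          by_cases hL' : d + (L - 1 - s) - i < L
          · have h1 : L - 1 - (d + (L - 1 - s) - i) < s := by omega
            have h2 := ih (L - 1 - (d + (L - 1 - s) - i)) h1 (by omega)
            rw [show L - 1 - (L - 1 - (d + (L - 1 - s) - i)) = d + (L - 1 - s) - i from
              by omega] at h2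
            rw [hφ, h2]
            simp
          · rw [hφ, hηNzero _ (by omega)]
            simp
        · rw [hdtop i hgt, zero_mul]
      · intro hd
        exact absurd (Finset.mem_range.mpr (by omega)) hd
  have hη0 : ∀ t, ηN t = 0 := by
    intro t
    by_cases ht : t < L
    · have := keyη (L - 1 - t) (by omega)
      rwa [show L - 1 - (L - 1 - t) = t from by omega] at this
    · exact hηNzero t (by omega)
  -- extract ξ Aˢ B = 0 for s < d
  have hξBlt : ∀ s, s < d → ξ ᵥ* (A ^ s * B) = 0 := by
    intro s
    induction s using Nat.strong_induction_on with
    | _ s ih =>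
      intro hs
      funext e
      have hk : d - 1 - s < n + L := by omega
      have h0 := congrFun (hW0 (d - 1 - s) hk) e
      rw [show W (d - 1 - s) e = ∑ i ∈ range (n + 1), αN i * φ i (d - 1 - s) e from
        by rw [hWdef]; simp [Finset.sum_apply]] at h0
      rw [Finset.sum_eq_single d] at h0
      · have hφ : φ d (d - 1 - s) e = (ξ ᵥ* (A ^ s * B)) e := by
          rw [show φ d (d - 1 - s) = ξ ᵥ* (A ^ (d - 1 - (d - 1 - s)) * B) from if_pos (by omega),
            show d - 1 - (d - 1 - s) = s from by omega]
        rw [hφ] at h0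
        rcases mul_eq_zero.mp h0 with h | h
        · exact absurd h hdne
        · exact h
      · intro i hi hne
        rcases lt_or_gt_of_ne hne with hlt | hgt
        · by_cases hik : d - 1 - s < i
          · have hφ : φ i (d - 1 - s) = ξ ᵥ* (A ^ (i - 1 - (d - 1 - s)) * B) := if_pos hik
            have := ih (i - 1 - (d - 1 - s)) (by omega) (by omega)
            rw [hφ, this]
            simp
          · have hφ : φ i (d - 1 - s) = ηN (d - 1 - s - i) := if_neg (by omega)
            rw [hφ, hη0]
            simp
        · rw [hdtop i hgt, zero_mul]
      · intro hd
        exact absurd (Finset.mem_range.mpr (by omega)) hd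
  -- extract ξ Aˢ B = 0 for all s
  have hξBall : ∀ s, ξ ᵥ* (A ^ s * B) = 0 := by
    intro s
    induction s using Nat.strong_induction_on with
    | _ s ih =>
      by_cases hsd : s < d
      · exact hξBlt s hsd
      · have hsplit : αN d • (ξ ᵥ* A ^ d) = -∑ i ∈ range d, αN i • (ξ ᵥ* A ^ i) := by
          have h1 : ∑ i ∈ range (n + 1), αN i • (ξ ᵥ* A ^ i)
              = ∑ i ∈ range (d + 1), αN i • (ξ ᵥ* A ^ i) := by
            symm
            refine Finset.sum_subset (Finset.range_subset_range.mpr (by omega)) ?_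
            intro i hi hni
            rw [hdtop i (by simp only [Finset.mem_range] at hni; omega), zero_smul]
          rw [h1, Finset.sum_range_succ] at hαsum
          exact eq_neg_of_add_eq_zero_right hαsum
        have hmain : αN d • (ξ ᵥ* (A ^ s * B)) = 0 := by
          have e1 : ξ ᵥ* (A ^ s * B) = (ξ ᵥ* A ^ d) ᵥ* (A ^ (s - d) * B) := by
            rw [Matrix.vecMul_vecMul, ← Matrix.mul_assoc, ← pow_add,
              show d + (s - d) = s from by omega]
          rw [e1, ← Matrix.smul_vecMul, hsplit, Matrix.neg_vecMul, sum_vecMul']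
          have : ∀ i ∈ range d, (αN i • (ξ ᵥ* A ^ i)) ᵥ* (A ^ (s - d) * B) = 0 := by
            intro i hi
            have hi' : i < d := Finset.mem_range.mp hi
            rw [Matrix.smul_vecMul, Matrix.vecMul_vecMul, ← Matrix.mul_assoc, ← pow_add]
            rw [ih (i + (s - d)) (by omega)]
            simp
          rw [Finset.sum_congr rfl this]
          simp
        rcases smul_eq_zero.mp hmain with h | h
        · exact absurd h hdne
        · exact h
  -- ξ = 0 by controllability
  have hξ0 : ξ = 0 := by
    have hkerC := (rank_eq_card_iff_ker (ctrbMat n m A B)).mp (by rw [hctrb]; simp)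
    apply hkerC
    funext p
    rw [Pi.zero_apply]
    rw [show (Matrix.vecMul ξ (ctrbMat n m A B)) p = ∑ r, ξ r * (A ^ (p.1 : ℕ) * B) r p.2
      from rfl]
    have := congrFun (hξBall (p.1 : ℕ)) p.2
    simpa [Matrix.vecMul, dotProduct] using this
  -- conclude
  funext r
  rw [Pi.zero_apply]
  cases r with
  | inl i => exact congrFun hξ0 i
  | inr p =>
    have := congrFun (hη0 (p.1 : ℕ)) p.2
    rw [show ηN ((p.1 : ℕ)) = fun e => v (Sum.inr (⟨(p.1 : ℕ), p.1.isLt⟩, e)) from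
      dif_pos p.1.isLt] at this
    simpa using this
end

section
/- (Fundamental lemma for multiple trajectories, rank statement.) Consider x(t+1) = Ax(t) + Bu(t) with (A,B) controllable. Let (u^i, x^i) be input/state trajectories on {0,...,T_i−1} for i=1,...,q, and assume the inputs u^1,...,u^q are collectively persistently exciting of order n + L. Then the matrix [H_1(x^1_{[0,T_1−L]}) ... H_1(x^q_{[0,T_q−L]}); H_L(u^1_{[0,T_1−1]}) ... H_L(u^q_{[0,T_q−1]})] has full row rank n + mL. -/
open Matrix Module Finset

lemma dotProduct_sum' {ι κ : Type*} [Fintype ι] (v : ι → ℝ) (s : Finset κ) (f : κ → ι → ℝ) :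
    v ⬝ᵥ (∑ k ∈ s, f k) = ∑ k ∈ s, v ⬝ᵥ f k := by
  classical
  induction s using Finset.induction with
  | empty => simp
  | insert _ _ h ih => simp [Finset.sum_insert h, dotProduct_add, ih]

lemma sum_dotProduct' {ι κ : Type*} [Fintype ι] (v : ι → ℝ) (s : Finset κ) (f : κ → ι → ℝ) :
    (∑ k ∈ s, f k) ⬝ᵥ v = ∑ k ∈ s, f k ⬝ᵥ v := by
  classical
  induction s using Finset.induction with
  | empty => simp
  | insert _ _ h ih => simp [Finset.sum_insert h, add_dotProduct, ih]

lemma sum_mul_dot_mulVec {n' : ℕ} (S : Finset ℕ) (c : ℕ → ℝ)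
    (M : ℕ → Matrix (Fin n') (Fin n') ℝ) (ξ y : Fin n' → ℝ) :
    ∑ s ∈ S, c s * (ξ ⬝ᵥ (M s *ᵥ y)) = ξ ⬝ᵥ ((∑ s ∈ S, c s • M s) *ᵥ y) := by
  classical
  induction S using Finset.induction with
  | empty => simp
  | insert _ _ h ih =>
      simp [Finset.sum_insert h, Matrix.add_mulVec, dotProduct_add, ih,
        Matrix.smul_mulVec, dotProduct_smul, smul_eq_mul]

lemma sum_range_ite_lt {M : Type*} [AddCommMonoid M] (f : ℕ → M) (s N : ℕ) (h : s ≤ N) :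
    ∑ τ ∈ Finset.range N, (if τ < s then f τ else 0) = ∑ τ ∈ Finset.range s, f τ := by
  rw [← Finset.sum_filter]
  congr 1
  ext τ
  simp only [Finset.mem_filter, Finset.mem_range]
  omega

lemma rank_eq_card_iff_vecMul {r c : Type*} [Fintype r] [Fintype c] (M : Matrix r c ℝ) :
    M.rank = Fintype.card r ↔ ∀ v : r → ℝ, M.vecMul v = 0 → v = 0 := by
  rw [← Matrix.rank_transpose]
  have hdef : Mᵀ.rank = finrank ℝ (LinearMap.range Mᵀ.mulVecLin) := rfl
  have hrn := LinearMap.finrank_range_add_finrank_ker (Mᵀ.mulVecLin)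
  rw [Module.finrank_fintype_fun_eq_card] at hrn
  have hker : (∀ v : r → ℝ, M.vecMul v = 0 → v = 0) ↔
      LinearMap.ker Mᵀ.mulVecLin = ⊥ := by
    rw [LinearMap.ker_eq_bot']
    constructor
    · intro h v hv
      exact h v (by rw [← Matrix.mulVec_transpose]; exact hv)
    · intro h v hv
      exact h v (by rw [Matrix.mulVecLin_apply, Matrix.mulVec_transpose]; exact hv)
  rw [hker, hdef]
  constructor
  · intro h
    have : finrank ℝ (LinearMap.ker Mᵀ.mulVecLin) = 0 := by omega
    exact Submodule.finrank_eq_zero.mp this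
  · intro h
    rw [h] at hrn
    simpa using hrn



/-- Mosaic-Hankel matrix of `q` sequences, concatenated horizontally. -/
def mosaicHankel (m k q : ℕ) (T : Fin q → ℕ) (u : Fin q → ℕ → Fin m → ℝ) :
    Matrix (Fin k × Fin m) ((i : Fin q) × Fin (T i - k + 1)) ℝ :=
  fun p c => u c.1 ((p.1 : ℕ) + (c.2 : ℕ)) p.2

/-- Mosaic stacked matrix
`[H_1(x^1) ⋯ H_1(x^q); H_L(u^1) ⋯ H_L(u^q)]`. -/
def mosaicStackedXU (n m L q : ℕ) (T : Fin q → ℕ)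
    (x : Fin q → ℕ → Fin n → ℝ) (u : Fin q → ℕ → Fin m → ℝ) :
    Matrix (Fin n ⊕ Fin L × Fin m) ((i : Fin q) × Fin (T i - L + 1)) ℝ :=
  fun r c =>
    Sum.elim (fun i => x c.1 (c.2 : ℕ) i)
      (fun p => u c.1 ((p.1 : ℕ) + (c.2 : ℕ)) p.2) r

/-- Fundamental lemma for multiple trajectories, rank statement: if `(A,B)` is
controllable, `(u^i,x^i)` are input/state trajectories, and the inputs are collectively
persistently exciting of order `n+L`, then the mosaic matrix
`[H_1(x^1) ⋯ H_1(x^q); H_L(u^1) ⋯ H_L(u^q)]` has full row rank `n + mL`. -/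
theorem multiple_trajectories_rank (n m L q : ℕ) (hL : 1 ≤ L)
    (T : Fin q → ℕ) (hT : ∀ i, n + L ≤ T i)
    (A : Matrix (Fin n) (Fin n) ℝ) (B : Matrix (Fin n) (Fin m) ℝ)
    (hctrb : (ctrbMat n m A B).rank = n)
    (u : Fin q → ℕ → Fin m → ℝ) (x : Fin q → ℕ → Fin n → ℝ)
    (hx : ∀ i, ∀ t, t + 1 < T i →
      x i (t + 1) = A.mulVec (x i t) + B.mulVec (u i t))
    (hpe : (mosaicHankel m (n + L) q T u).rank = (n + L) * m) :
    (mosaicStackedXU n m L q T x u).rank = n + L * m := by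
  have hcard : n + L * m = Fintype.card (Fin n ⊕ Fin L × Fin m) := by simp
  rw [hcard]
  rw [rank_eq_card_iff_vecMul]
  intro v hv
  -- full-rank consequences of the hypotheses
  have hPE : ∀ w : Fin (n + L) × Fin m → ℝ,
      (mosaicHankel m (n + L) q T u).vecMul w = 0 → w = 0 := by
    refine (rank_eq_card_iff_vecMul _).mp ?_
    rw [hpe]; simp
  have hC : ∀ ξ : Fin n → ℝ, (ctrbMat n m A B).vecMul ξ = 0 → ξ = 0 := by
    refine (rank_eq_card_iff_vecMul _).mp ?_
    rw [hctrb]; simp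
  -- components of v
  set ξ : Fin n → ℝ := fun j => v (Sum.inl j) with hξdef
  set ηe : ℕ → Fin m → ℝ :=
    fun l => if h : l < L then (fun p => v (Sum.inr (⟨l, h⟩, p))) else 0 with hηdef
  -- key pointwise relation from v being in the left kernel
  have hK : ∀ (i : Fin q) (t : ℕ), t + L ≤ T i →
      ξ ⬝ᵥ x i t + ∑ l ∈ Finset.range L, (ηe l) ⬝ᵥ u i (t + l) = 0 := by
    intro i t ht
    have htc : t < T i - L + 1 := by have := hT i; omega
    have h0 := congrFun hv ⟨i, ⟨t, htc⟩⟩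
    simp only [Matrix.vecMul, dotProduct, mosaicStackedXU, Fintype.sum_sum_type,
      Fintype.sum_prod_type, Sum.elim_inl, Sum.elim_inr, Pi.zero_apply] at h0
    have h1 : ∑ l ∈ Finset.range L, (ηe l) ⬝ᵥ u i (t + l)
        = ∑ l : Fin L, ∑ p : Fin m, v (Sum.inr (l, p)) * u i ((l : ℕ) + t) p := by
      rw [← Fin.sum_univ_eq_sum_range (fun l => (ηe l) ⬝ᵥ u i (t + l)) L]
      refine Finset.sum_congr rfl fun l _ => ?_
      simp only [hηdef, l.isLt, dif_pos, Fin.eta]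
      simp [dotProduct, Nat.add_comm t l]
    rw [h1]
    exact h0
  -- state evolution formula
  have hevol : ∀ (i : Fin q) (s t : ℕ), t + s + L ≤ T i →
      x i (t + s) = (A ^ s) *ᵥ (x i t)
        + ∑ τ ∈ Finset.range s, ((A ^ (s - 1 - τ)) * B) *ᵥ (u i (t + τ)) := by
    intro i s
    induction s with
    | zero => intro t ht; simp [Matrix.one_mulVec]
    | succ s ih =>
      intro t ht
      have h1 : t + s + L ≤ T i := by omega
      have h2 : t + s + 1 < T i := by omega
      have hstep := hx i (t + s) h2
      have hrw : t + (s + 1) = (t + s) + 1 := by omega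
      rw [hrw, hstep, ih t h1, Matrix.mulVec_add, Matrix.mulVec_mulVec]
      have hsum : A *ᵥ (∑ τ ∈ Finset.range s, ((A ^ (s - 1 - τ)) * B) *ᵥ (u i (t + τ)))
          = ∑ τ ∈ Finset.range s, ((A ^ (s - τ)) * B) *ᵥ (u i (t + τ)) := by
        rw [← Matrix.mulVecLin_apply, map_sum]
        refine Finset.sum_congr rfl fun τ hτ => ?_
        rw [Finset.mem_range] at hτ
        rw [Matrix.mulVecLin_apply, Matrix.mulVec_mulVec, ← Matrix.mul_assoc, ← pow_succ']
        have : s - 1 - τ + 1 = s - τ := by omega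
        rw [this]
      rw [hsum, Finset.sum_range_succ]
      have he1 : A * A ^ s = A ^ (s + 1) := by rw [pow_succ']
      have he2 : ∀ τ, s + 1 - 1 - τ = s - τ := fun τ => by omega
      simp only [he1, he2, Nat.sub_self, pow_zero, Matrix.one_mul]
      abel
  -- Cayley–Hamilton coefficients
  set a : ℕ → ℝ := fun s => A.charpoly.coeff s with hadef
  have hdeg : A.charpoly.natDegree = n := by
    rw [Matrix.charpoly_natDegree_eq_dim]; simp
  have han : a n = 1 := by
    have hmon := A.charpoly_monic
    rw [hadef]
    simpa [Polynomial.Monic, Polynomial.leadingCoeff, hdeg] using hmon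
  have hCH : ∑ s ∈ Finset.range (n + 1), a s • A ^ s = 0 := by
    have h := A.aeval_self_charpoly
    rw [Polynomial.aeval_eq_sum_range, hdeg] at h
    exact h
  -- the combined left-kernel vector for the deep Hankel matrix
  set wN : ℕ → Fin m → ℝ := fun r =>
    ∑ s ∈ Finset.range (n + 1),
      ((if r < s then a s • (Matrix.vecMul ξ ((A ^ (s - 1 - r)) * B)) else 0)
        + (if s ≤ r then a s • ηe (r - s) else 0)) with hwNdef
  have hwN0 : ∀ (i : Fin q) (j : ℕ), j + (n + L) ≤ T i →
      ∑ r ∈ Finset.range (n + L), (wN r) ⬝ᵥ u i (j + r) = 0 := by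
    intro i j hj
    have h0 : ∑ s ∈ Finset.range (n + 1),
        a s * (ξ ⬝ᵥ x i (j + s) + ∑ l ∈ Finset.range L, (ηe l) ⬝ᵥ u i ((j + s) + l)) = 0 := by
      refine Finset.sum_eq_zero fun s hs => ?_
      rw [Finset.mem_range] at hs
      rw [hK i (j + s) (by omega), mul_zero]
    have e3 : ∀ s, s ≤ n → ∑ l ∈ Finset.range L, a s * ((ηe l) ⬝ᵥ u i ((j + s) + l))
        = ∑ r ∈ Finset.range (n + L),
            (if s ≤ r then a s * ((ηe (r - s)) ⬝ᵥ u i (j + r)) else 0) := by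
      intro s hs
      rw [← Finset.sum_filter]
      have hfil : (Finset.range (n + L)).filter (fun r => s ≤ r) = Finset.Ico s (n + L) := by
        ext r
        simp only [Finset.mem_filter, Finset.mem_Ico, Finset.mem_range]
        omega
      rw [hfil, ← Finset.sum_Ico_consecutive _ (show s ≤ s + L by omega)
        (show s + L ≤ n + L by omega)]
      have h2 : ∑ r ∈ Finset.Ico (s + L) (n + L), a s * ((ηe (r - s)) ⬝ᵥ u i (j + r)) = 0 := by
        refine Finset.sum_eq_zero fun r hr => ?_
        rw [Finset.mem_Ico] at hr
        have hz : ηe (r - s) = 0 := by rw [hηdef]; exact dif_neg (by omega)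
        rw [hz, zero_dotProduct, mul_zero]
      rw [h2, add_zero, Finset.sum_Ico_eq_sum_range]
      have hLL : s + L - s = L := by omega
      rw [hLL]
      refine Finset.sum_congr rfl fun l hl => ?_
      have h1 : s + l - s = l := by omega
      have h2 : j + (s + l) = (j + s) + l := by omega
      rw [h1, h2]
    have key : ∑ s ∈ Finset.range (n + 1),
        a s * (ξ ⬝ᵥ x i (j + s) + ∑ l ∈ Finset.range L, (ηe l) ⬝ᵥ u i ((j + s) + l))
        = ξ ⬝ᵥ ((∑ s ∈ Finset.range (n + 1), a s • A ^ s) *ᵥ x i j)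
          + ∑ r ∈ Finset.range (n + L), (wN r) ⬝ᵥ u i (j + r) := by
      have step1 : ∑ s ∈ Finset.range (n + 1),
          a s * (ξ ⬝ᵥ x i (j + s) + ∑ l ∈ Finset.range L, (ηe l) ⬝ᵥ u i ((j + s) + l))
          = ∑ s ∈ Finset.range (n + 1),
              (a s * (ξ ⬝ᵥ ((A ^ s) *ᵥ x i j))
                + ((∑ r ∈ Finset.range (n + L),
                    (if r < s then a s * ((Matrix.vecMul ξ ((A ^ (s - 1 - r)) * B)) ⬝ᵥ u i (j + r)) else 0))
                  + ∑ r ∈ Finset.range (n + L),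
                    (if s ≤ r then a s * ((ηe (r - s)) ⬝ᵥ u i (j + r)) else 0))) := by
        refine Finset.sum_congr rfl fun s hs => ?_
        rw [Finset.mem_range] at hs
        rw [hevol i s j (by omega), dotProduct_add, dotProduct_sum',
          mul_add, mul_add, Finset.mul_sum, ← e3 s (by omega), add_assoc]
        congr 2
        · refine Eq.trans (Finset.sum_congr rfl fun τ _ => ?_)
            (sum_range_ite_lt
              (fun r => a s * ((Matrix.vecMul ξ ((A ^ (s - 1 - r)) * B)) ⬝ᵥ u i (j + r)))
              s (n + L) (by omega)).symm
          rw [Matrix.dotProduct_mulVec]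
        · rw [Finset.mul_sum]
      rw [step1, Finset.sum_add_distrib, Finset.sum_add_distrib,
        sum_mul_dot_mulVec, Finset.sum_comm, Finset.sum_comm (s := Finset.range (n + 1))]
      congr 1
      rw [← Finset.sum_add_distrib]
      refine Finset.sum_congr rfl fun r _ => ?_
      rw [hwNdef, sum_dotProduct']
      have hsplit : ∀ k ∈ Finset.range (n + 1),
          ((if r < k then a k • (Matrix.vecMul ξ ((A ^ (k - 1 - r)) * B)) else 0)
            + (if k ≤ r then a k • ηe (r - k) else 0)) ⬝ᵥ u i (j + r)
          = (if r < k then a k * ((Matrix.vecMul ξ ((A ^ (k - 1 - r)) * B)) ⬝ᵥ u i (j + r)) else 0)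
            + (if k ≤ r then a k * ((ηe (r - k)) ⬝ᵥ u i (j + r)) else 0) := by
        intro k _
        rw [add_dotProduct]
        congr 1
        · split_ifs with h
          · rw [smul_dotProduct, smul_eq_mul]
          · rw [zero_dotProduct]
        · split_ifs with h
          · rw [smul_dotProduct, smul_eq_mul]
          · rw [zero_dotProduct]
      rw [Finset.sum_congr rfl hsplit, Finset.sum_add_distrib]
    rw [h0, hCH, Matrix.zero_mulVec, dotProduct_zero, zero_add] at key
    exact key.symm
  -- conclude that the combined vector is in the left kernel of the deep Hankel matrix
  have hw : (fun rp : Fin (n + L) × Fin m => wN (rp.1 : ℕ) rp.2) = 0 := by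
    apply hPE
    funext c
    obtain ⟨i, j⟩ := c
    have hj : (j : ℕ) + (n + L) ≤ T i := by
      have h1 := hT i
      have h2 := j.isLt
      omega
    have hz := hwN0 i j hj
    simp only [Matrix.vecMul, dotProduct, mosaicHankel, Fintype.sum_prod_type,
      Pi.zero_apply]
    rw [← hz, ← Fin.sum_univ_eq_sum_range (fun r => wN r ⬝ᵥ u i ((j : ℕ) + r)) (n + L)]
    refine Finset.sum_congr rfl fun r _ => ?_
    simp [dotProduct, Nat.add_comm (r : ℕ) (j : ℕ)]
  have hwN_apply : ∀ (r : ℕ) (p : Fin m), r < n + L →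
      ∑ s ∈ Finset.range (n + 1),
        ((if r < s then a s * ((Matrix.vecMul ξ ((A ^ (s - 1 - r)) * B)) p) else 0)
          + (if s ≤ r then a s * ηe (r - s) p else 0)) = 0 := by
    intro r p hr
    have h1 := congrFun hw (⟨r, hr⟩, p)
    simp only [Pi.zero_apply] at h1
    rw [hwNdef] at h1
    simpa [Finset.sum_apply, Pi.add_apply, apply_ite (fun g : Fin m → ℝ => g p),
      Pi.smul_apply, smul_eq_mul] using h1
  -- extract η = 0 by downward induction
  have hηe0 : ∀ d, ηe d = 0 := by
    have main : ∀ k d, L - d ≤ k → ηe d = 0 := by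
      intro k
      induction k with
      | zero =>
        intro d hd
        rw [hηdef]
        exact dif_neg (by omega)
      | succ k ih =>
        intro d hd
        by_cases hdL : L ≤ d
        · rw [hηdef]; exact dif_neg (by omega)
        · push_neg at hdL
          funext p
          have hr : n + d < n + L := by omega
          have h1 := hwN_apply (n + d) p hr
          have h2 : ∑ s ∈ Finset.range (n + 1), a s * ηe (n + d - s) p = 0 := by
            rw [← h1]
            refine Finset.sum_congr rfl fun s hs => ?_
            rw [Finset.mem_range] at hs
            rw [if_neg (by omega), if_pos (by omega), zero_add]
          rw [Finset.sum_range_succ] at h2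
          have hz : ∀ s ∈ Finset.range n, a s * ηe (n + d - s) p = 0 := by
            intro s hs
            rw [Finset.mem_range] at hs
            rw [ih (n + d - s) (by omega)]
            simp
          rw [Finset.sum_eq_zero hz, zero_add] at h2
          have hnd : n + d - n = d := by omega
          rw [hnd, han, one_mul] at h2
          simpa using h2
    exact fun d => main L d (by omega)
  -- extract ξ ᵥ* A^k B = 0 by strong induction
  have hξA : ∀ k, k < n → Matrix.vecMul ξ ((A ^ k) * B) = 0 := by
    intro k
    induction k using Nat.strong_induction_on with
    | _ k ih =>
      intro hk
      funext p
      have hr : n - 1 - k < n + L := by omega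
      have h1 := hwN_apply (n - 1 - k) p hr
      have h2 : ∑ s ∈ Finset.range (n + 1),
          (if n - 1 - k < s then a s * ((Matrix.vecMul ξ ((A ^ (s - 1 - (n - 1 - k))) * B)) p) else 0)
          = 0 := by
        refine Eq.trans (Finset.sum_congr rfl fun s hs => ?_) h1
        rw [hηe0 (n - 1 - k - s)]
        simp
      rw [Finset.sum_range_succ] at h2
      have hz : ∀ s ∈ Finset.range n,
          (if n - 1 - k < s then a s * ((Matrix.vecMul ξ ((A ^ (s - 1 - (n - 1 - k))) * B)) p) else 0)
          = 0 := by
        intro s hs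
        rw [Finset.mem_range] at hs
        split_ifs with h
        · rw [ih (s - 1 - (n - 1 - k)) (by omega) (by omega)]
          simp
        · rfl
      rw [Finset.sum_eq_zero hz, zero_add, if_pos (by omega)] at h2
      have hee : n - 1 - (n - 1 - k) = k := by omega
      rw [hee, han, one_mul] at h2
      simpa using h2
  -- conclude ξ = 0 using controllability
  have hξ0 : ξ = 0 := by
    apply hC
    funext kp
    obtain ⟨k, p⟩ := kp
    have h1 := congrFun (hξA k k.isLt) p
    simp only [Matrix.vecMul, dotProduct, ctrbMat, Pi.zero_apply] at h1 ⊢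
    exact h1
  -- assemble: v = 0
  funext rp
  cases rp with
  | inl jj =>
    have h1 := congrFun hξ0 jj
    rw [hξdef] at h1
    simpa using h1
  | inr lp =>
    obtain ⟨l, p⟩ := lp
    have h1 := congrFun (hηe0 (l : ℕ)) p
    rw [hηdef] at h1
    simpa [l.isLt] using h1
end
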